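/- Let B be a weakly 2-wise balanced design over a finite set A, let a = |A|, b = |B|, and let n = Σ_{C ∈ B} |C| be the number of incidence pairs. Then n² ≤ a·(b² − b + n), i.e., n² − a·n − a·(b² − b) ≤ 0; equivalently a ≥ n² / (b² − b + n). -/

import Mathlib

open Finset

/-- `B` is a weakly `m`-wise balanced design over the finite set `A`:
every block is a nonempty subset of `A`, every point of `A` lies in at least
one block, and any `m` pairwise distinct points of `A` are contained together
in at most one block. -/
def IsWeaklyBalancedDesign {α : Type*} [DecidableEq α] (m : ℕ)
    (A : Finset α) (B : Finset (Finset α)) : Prop :=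
  (∀ C ∈ B, C ⊆ A) ∧
  (∀ C ∈ B, C.Nonempty) ∧
  (∀ x ∈ A, ∃ C ∈ B, x ∈ C) ∧
  (∀ S : Finset α, S ⊆ A → S.card = m → (B.filter fun C => S ⊆ C).card ≤ 1)

/-- The vertex set of `Γ_{B,m}`: all incidence pairs `(x, C)` with `x ∈ C ∈ B`. -/
def designVerts {α : Type*} [DecidableEq α] (B : Finset (Finset α)) :
    Finset (α × Finset α) :=
  B.biUnion fun C => C.image fun x => (x, C)

/-- The graph `Γ_{B,m}` on incidence pairs: `(x, C₁)` and `(y, C₂)` are adjacent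
iff `x < y`, `C₁ ≠ C₂` and `x ∈ C₂`, or symmetrically `y < x`, `C₂ ≠ C₁` and `y ∈ C₁`. -/
def designGraph {α : Type*} [inst : LinearOrder α] (B : Finset (Finset α)) :
    SimpleGraph (designVerts (α := α) B) where
  Adj u v :=
    (u.val.1 < v.val.1 ∧ u.val.2 ≠ v.val.2 ∧ u.val.1 ∈ v.val.2) ∨
    (v.val.1 < u.val.1 ∧ v.val.2 ≠ u.val.2 ∧ v.val.1 ∈ u.val.2)
  symm := ⟨fun u v h => by tauto⟩
  loopless := ⟨fun u h => by
    rcases h with ⟨h, _, _⟩ | ⟨h, _, _⟩ <;> exact lt_irrefl _ h⟩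

/-- The independence number of a graph: the largest size of an independent set of vertices. -/
noncomputable def indepNum {V : Type*} (G : SimpleGraph V) : ℕ :=
  sSup {n | ∃ s : Finset V, s.card = n ∧ ∀ x ∈ s, ∀ y ∈ s, ¬ G.Adj x y}

/-- Let `B` be a weakly `2`-wise balanced design over a finite set `A`, let `a = |A|`,
`b = |B|`, and let `n = ∑_{C ∈ B} |C|` be the number of incidence pairs.
Then `n² ≤ a·(b² - b + n)`. -/
theorem wbd_incidence_bound {α : Type*} [DecidableEq α]
    (A : Finset α) (B : Finset (Finset α))
    (hB : IsWeaklyBalancedDesign 2 A B) :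
    ((∑ C ∈ B, C.card : ℕ) : ℤ) ^ 2 ≤
      (A.card : ℤ) * ((B.card : ℤ) ^ 2 - (B.card : ℤ) + ((∑ C ∈ B, C.card : ℕ) : ℤ)) := by
  obtain ⟨hsub, hne, hcov, hpair⟩ := hB
  set d : α → ℕ := fun x => (B.filter fun C => x ∈ C).card with hd
  -- Step 1: n = ∑_{x ∈ A} d x
  have hn : (∑ C ∈ B, C.card) = ∑ x ∈ A, d x := by
    have : ∀ C ∈ B, C.card = (A.filter fun x => x ∈ C).card := by
      intro C hC
      rw [Finset.filter_mem_eq_inter, Finset.inter_eq_right.2 (hsub C hC)]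
    rw [Finset.sum_congr rfl this]
    simp only [Finset.card_filter, hd]
    exact Finset.sum_comm
  -- Step 2: ∑_{x ∈ A} (d x * d x - d x) ≤ b*b - b
  have hfilter : ∀ x, ((B.offDiag).filter fun p => x ∈ p.1 ∧ x ∈ p.2)
      = (B.filter fun C => x ∈ C).offDiag := by
    intro x
    ext p
    simp only [Finset.mem_filter, Finset.mem_offDiag]
    tauto
  have hkey : ∑ x ∈ A, (d x * d x - d x) ≤ B.card * B.card - B.card := by
    have h1 : ∀ x, d x * d x - d x = ((B.offDiag).filter fun p => x ∈ p.1 ∧ x ∈ p.2).card := by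
      intro x
      rw [hfilter x, Finset.offDiag_card]
    calc ∑ x ∈ A, (d x * d x - d x)
        = ∑ x ∈ A, ((B.offDiag).filter fun p => x ∈ p.1 ∧ x ∈ p.2).card :=
          Finset.sum_congr rfl fun x _ => h1 x
      _ = ∑ x ∈ A, ∑ p ∈ B.offDiag, (if x ∈ p.1 ∧ x ∈ p.2 then 1 else 0) := by
          refine Finset.sum_congr rfl fun x _ => ?_
          rw [Finset.card_filter]
      _ = ∑ p ∈ B.offDiag, ∑ x ∈ A, (if x ∈ p.1 ∧ x ∈ p.2 then 1 else 0) :=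
          Finset.sum_comm
      _ ≤ ∑ _p ∈ B.offDiag, 1 := by
          apply Finset.sum_le_sum
          intro p hp
          rw [Finset.mem_offDiag] at hp
          obtain ⟨hp1, hp2, hp12⟩ := hp
          rw [← Finset.card_filter, Finset.card_le_one]
          intro x hx y hy
          simp only [Finset.mem_filter] at hx hy
          by_contra hxy
          have hScard : ({x, y} : Finset α).card = 2 := Finset.card_pair hxy
          have hSA : ({x, y} : Finset α) ⊆ A := by
            intro z hz
            rcases Finset.mem_insert.1 hz with h | h
            · exact hsub p.1 hp1 (h ▸ hx.2.1)
            · exact hsub p.1 hp1 ((Finset.mem_singleton.1 h) ▸ hy.2.1)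
          have hle1 := hpair {x, y} hSA hScard
          have h1' : p.1 ∈ B.filter fun C => ({x, y} : Finset α) ⊆ C := by
            simp only [Finset.mem_filter, Finset.insert_subset_iff, Finset.singleton_subset_iff]
            exact ⟨hp1, hx.2.1, hy.2.1⟩
          have h2' : p.2 ∈ B.filter fun C => ({x, y} : Finset α) ⊆ C := by
            simp only [Finset.mem_filter, Finset.insert_subset_iff, Finset.singleton_subset_iff]
            exact ⟨hp2, hx.2.2, hy.2.2⟩
          exact hp12 (Finset.card_le_one.1 hle1 _ h1' _ h2')
      _ = B.card * B.card - B.card := by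
          rw [Finset.sum_const, smul_eq_mul, mul_one, ← Finset.offDiag_card]
  -- each x ∈ A has d x ≥ 1
  have hd1 : ∀ x ∈ A, 1 ≤ d x := by
    intro x hx
    obtain ⟨C, hC, hxC⟩ := hcov x hx
    exact Finset.card_pos.2 ⟨C, Finset.mem_filter.2 ⟨hC, hxC⟩⟩
  have hbb : B.card ≤ B.card * B.card := by
    rcases Nat.eq_zero_or_pos B.card with h | h
    · simp [h]
    · exact Nat.le_mul_of_pos_left _ h
  -- cast to ℤ
  have hkeyZ : (∑ x ∈ A, ((d x : ℤ) ^ 2 - (d x : ℤ))) ≤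
      (B.card : ℤ) ^ 2 - (B.card : ℤ) := by
    have hcast : ∀ x ∈ A, ((d x * d x - d x : ℕ) : ℤ) = (d x : ℤ) ^ 2 - (d x : ℤ) := by
      intro x hx
      rw [Nat.cast_sub (Nat.le_mul_of_pos_left _ (hd1 x hx)), Nat.cast_mul, sq]
    calc (∑ x ∈ A, ((d x : ℤ) ^ 2 - (d x : ℤ)))
        = ((∑ x ∈ A, (d x * d x - d x) : ℕ) : ℤ) := by
          rw [Nat.cast_sum]; exact (Finset.sum_congr rfl hcast).symm
      _ ≤ ((B.card * B.card - B.card : ℕ) : ℤ) := by exact_mod_cast hkey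
      _ = (B.card : ℤ) ^ 2 - (B.card : ℤ) := by
          rw [Nat.cast_sub hbb, Nat.cast_mul, sq]
  have hCS : ((∑ x ∈ A, (d x : ℤ)) ^ 2) ≤ (A.card : ℤ) * ∑ x ∈ A, (d x : ℤ) ^ 2 :=
    sq_sum_le_card_mul_sum_sq
  have hnZ : ((∑ C ∈ B, C.card : ℕ) : ℤ) = ∑ x ∈ A, (d x : ℤ) := by
    rw [hn]; push_cast; rfl
  have hsum2 : ∑ x ∈ A, (d x : ℤ) ^ 2 ≤
      (B.card : ℤ) ^ 2 - (B.card : ℤ) + ∑ x ∈ A, (d x : ℤ) := by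
    rw [Finset.sum_sub_distrib] at hkeyZ
    linarith
  have ha : (0 : ℤ) ≤ (A.card : ℤ) := Nat.cast_nonneg _
  calc ((∑ C ∈ B, C.card : ℕ) : ℤ) ^ 2
      = ((∑ x ∈ A, (d x : ℤ)) ^ 2) := by rw [hnZ]
    _ ≤ (A.card : ℤ) * ∑ x ∈ A, (d x : ℤ) ^ 2 := hCS
    _ ≤ (A.card : ℤ) * ((B.card : ℤ) ^ 2 - (B.card : ℤ) + ∑ x ∈ A, (d x : ℤ)) :=
        mul_le_mul_of_nonneg_left hsum2 ha
    _ = (A.card : ℤ) * ((B.card : ℤ) ^ 2 - (B.card : ℤ) + ((∑ C ∈ B, C.card : ℕ) : ℤ)) := by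
        rw [hnZ]
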